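/- Let 𝒞 be a variety of L-algebras, A ∈ 𝒞, B a subalgebra of A, W a term in a set S of variables, and x = (x_s)_{s∈S} an S-tuple of elements of A. If T₁ and T₂ are subsets of S, each transferable over B with respect to W(x), and their intersection T₁ ∩ T₂ is also transferable over B with respect to W(x), then their union T₁ ∪ T₂ is transferable over B with respect to W(x). In particular, if T₁ ∩ T₂ = ∅ and each of T₁, T₂ is transferable over B with respect to W(x), then so is T₁ ∪ T₂. -/
import Mathlib


open FirstOrder Language

universe u v w x

open Classical in
/-- Transferability of a set of variables. -/
def Transferable {L : FirstOrder.Language.{u, v}} (T : L.Theory) {A : Type w} [L.Structure A]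
    (B : L.Substructure A) {S : Type x} (W : L.Term S) (xs : S → A) (t : Set S) : Prop :=
  ∀ S₁ S₂ : Set S, Disjoint S₁ t → Disjoint S₁ S₂ → Disjoint t S₂ →
    S₁ ∪ t ∪ S₂ = Set.univ →
    ∀ (C : Type (max u v w)) [L.Structure C] [T.Model C], ∀ f g : A →[L] C,
      (∀ b ∈ B, f b = g b) →
      Term.realize (fun s => if s ∈ S₁ ∪ t then f (xs s) else g (xs s)) W =
      Term.realize (fun s => if s ∈ S₁ then f (xs s) else g (xs s)) W

/-- The dominion of a subalgebra `B` of `A` in the variety of models of `T`. -/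
def Dominion {L : FirstOrder.Language.{u, v}} (T : L.Theory) {A : Type w} [L.Structure A]
    (B : L.Substructure A) : Set A :=
  {a : A | ∀ (C : Type (max u v w)) [L.Structure C] [T.Model C], ∀ f g : A →[L] C,
    (∀ b ∈ B, f b = g b) → f a = g a}

theorem ite_set_congr {α : Sort*} {S : Type*} {X Y : Set S} (h : X = Y) (s : S)
    (iX : Decidable (s ∈ X)) (iY : Decidable (s ∈ Y)) (a b : α) :
    @ite α (s ∈ X) iX a b = @ite α (s ∈ Y) iY a b := by
  subst h; rw [Subsingleton.elim iX iY]

/-- If `T₁` and `T₂` are subsets of `S`, each transferable over `B` with respect to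
`W(x)`, and their intersection is also transferable, then their union is transferable.
In particular, if `T₁ ∩ T₂ = ∅` and each is transferable, then so is their union. -/
theorem transferable_union {L : FirstOrder.Language.{u, v}} (T : L.Theory) {A : Type w}
    [L.Structure A] [T.Model A] (B : L.Substructure A) {S : Type x} (W : L.Term S)
    (xs : S → A) (T₁ T₂ : Set S)
    (hT₁ : Transferable T B W xs T₁) (hT₂ : Transferable T B W xs T₂) :
    (Transferable T B W xs (T₁ ∩ T₂) → Transferable T B W xs (T₁ ∪ T₂)) ∧
    (T₁ ∩ T₂ = ∅ → Transferable T B W xs (T₁ ∪ T₂)) := by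
  have hempty : Transferable T B W xs (∅ : Set S) := by
    intro S₁ S₂ _ _ _ _ C _ _ f g _
    exact congrArg (fun (v : S → C) => Term.realize v W)
      (funext fun s => ite_set_congr (Set.union_empty S₁) s _ _ _ _)
  have key : Transferable T B W xs (T₁ ∩ T₂) → Transferable T B W xs (T₁ ∪ T₂) := by
    intro hI S₁ S₂ hd1 hd2 hd3 hcov C _ _ f g hfg
    rw [Set.disjoint_left] at hd1 hd2 hd3
    rw [Set.eq_univ_iff_forall] at hcov
    have e1 := hT₂ (S₁ ∪ (T₁ \ T₂)) S₂ ?_ ?_ ?_ ?_ C f g hfg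
    · have e2 := hI (S₁ ∪ (T₁ \ T₂)) ((T₂ \ T₁) ∪ S₂) ?_ ?_ ?_ ?_ C f g hfg
      · have e3 := hT₁ S₁ ((T₂ \ T₁) ∪ S₂) ?_ ?_ ?_ ?_ C f g hfg
        · have s1 : (S₁ ∪ (T₁ \ T₂)) ∪ T₂ = S₁ ∪ (T₁ ∪ T₂) := by
            ext a; simp only [Set.mem_union, Set.mem_diff]; tauto
          have s2 : (S₁ ∪ (T₁ \ T₂)) ∪ (T₁ ∩ T₂) = S₁ ∪ T₁ := by
            ext a; simp only [Set.mem_union, Set.mem_diff, Set.mem_inter_iff]; tauto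
          have cg : ∀ (X Y : Set S) (hX : ∀ s, Decidable (s ∈ X))
              (hY : ∀ s, Decidable (s ∈ Y)), X = Y →
              Term.realize (fun s => @ite C (s ∈ X) (hX s) (f (xs s)) (g (xs s))) W =
              Term.realize (fun s => @ite C (s ∈ Y) (hY s) (f (xs s)) (g (xs s))) W := by
            rintro X Y hX hY rfl
            exact congrArg (fun (v : S → C) => Term.realize v W)
              (funext fun s => by rw [Subsingleton.elim (hX s) (hY s)])
          exact (((cg _ _ _ _ s1).symm.trans e1).trans
            ((cg _ _ _ _ s2).symm.trans e2).symm).trans e3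
        · rw [Set.disjoint_left]; intro a ha hb
          exact hd1 ha (Or.inl hb)
        · rw [Set.disjoint_left]; intro a ha hb
          simp only [Set.mem_union, Set.mem_diff] at hb
          rcases hb with ⟨_, h⟩ | h
          · exact hd1 ha (Or.inr ‹_›)
          · exact hd2 ha h
        · rw [Set.disjoint_left]; intro a ha hb
          simp only [Set.mem_union, Set.mem_diff] at hb
          rcases hb with ⟨_, h⟩ | h
          · exact h ha
          · exact hd3 (Or.inl ha) h
        · rw [Set.eq_univ_iff_forall]; intro a
          have := hcov a
          simp only [Set.mem_union, Set.mem_diff] at this ⊢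
          tauto
      · rw [Set.disjoint_left]; intro a ha hb
        simp only [Set.mem_union, Set.mem_diff] at ha
        simp only [Set.mem_inter_iff] at hb
        rcases ha with h | ⟨_, h⟩
        · exact hd1 h (Or.inl hb.1)
        · exact h hb.2
      · rw [Set.disjoint_left]; intro a ha hb
        simp only [Set.mem_union, Set.mem_diff] at ha hb
        rcases ha with h | ⟨h1, h2⟩
        · rcases hb with ⟨h', _⟩ | h'
          · exact hd1 h (Or.inr h')
          · exact hd2 h h'
        · rcases hb with ⟨_, h'⟩ | h'
          · exact h' h1
          · exact hd3 (Or.inl h1) h'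
      · rw [Set.disjoint_left]; intro a ha hb
        simp only [Set.mem_inter_iff] at ha
        simp only [Set.mem_union, Set.mem_diff] at hb
        rcases hb with ⟨_, h⟩ | h
        · exact h ha.1
        · exact hd3 (Or.inl ha.1) h
      · rw [Set.eq_univ_iff_forall]; intro a
        have := hcov a
        simp only [Set.mem_union, Set.mem_diff, Set.mem_inter_iff] at this ⊢
        tauto
    · rw [Set.disjoint_left]; intro a ha hb
      simp only [Set.mem_union, Set.mem_diff] at ha
      rcases ha with h | ⟨_, h⟩
      · exact hd1 h (Or.inr hb)
      · exact h hb
    · rw [Set.disjoint_left]; intro a ha hb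
      simp only [Set.mem_union, Set.mem_diff] at ha
      rcases ha with h | ⟨h', _⟩
      · exact hd2 h hb
      · exact hd3 (Or.inl h') hb
    · rw [Set.disjoint_left]; intro a ha hb
      exact hd3 (Or.inr ha) hb
    · rw [Set.eq_univ_iff_forall]; intro a
      have := hcov a
      simp only [Set.mem_union, Set.mem_diff] at this ⊢
      tauto
  exact ⟨key, fun h => key (h ▸ hempty)⟩
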